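/- For d = 2j+1 and b = a, if jr - α - js + β = dk for some integer k, then ⟨jα;ra | jβ;sa⟩ = (-1)^{(d-1)k} q^{j(β-α)}, a complex number of modulus 1. -/

import Mathlib

open Complex Finset

/-- The phase function `ρ(j,m,x,y,z) = (j+m)(j-m+1)x/2 - jmy + (j+m)z`. -/
noncomputable def rho (j m x y z : ℝ) : ℝ :=
  (j + m) * (j - m + 1) * x / 2 - j * m * y + (j + m) * z

/-- The vector `|jα;ra⟩` of components `(1/√d) q^{ρ(j, k-j, a, r, α)}`, `k = 0,…,d-1`,
where `j = (d-1)/2` and `q^x = exp(2πix/d)`. -/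
noncomputable def mubVec (d : ℕ) (a r α : ℝ) : Fin d → ℂ := fun k =>
  ((1 / Real.sqrt d : ℝ) : ℂ) *
    Complex.exp (2 * (Real.pi : ℂ) * Complex.I *
      ((rho (((d : ℝ) - 1) / 2) ((k : ℝ) - ((d : ℝ) - 1) / 2) a r α : ℝ) / (d : ℂ)))

/-- The overlap `⟨jα;ra | jβ;sb⟩` (standard Hermitian inner product on `ℂ^d`). -/
noncomputable def overlap (d : ℕ) (a r : ℝ) (α : ℝ) (b s : ℝ) (β : ℝ) : ℂ :=
  ∑ k : Fin d, (starRingEnd ℂ) (mubVec d a r α k) * mubVec d b s β k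

/-- for `b = a`, if `jr - α - js + β = dk` for some integer `k`, then
`⟨jα;ra | jβ;sa⟩ = (-1)^{(d-1)k} q^{j(β-α)}`, a complex number of modulus 1. -/
theorem stmt_10 (d : ℕ) (hd : 2 ≤ d) (a r s : ℝ) (α β : ℕ) (hα : α < d) (hβ : β < d)
    (k : ℤ) (hθ : ((d : ℝ) - 1) / 2 * r - α - ((d : ℝ) - 1) / 2 * s + β = d * k) :
    overlap d a r α a s β =
      ((-1 : ℂ) ^ (((d : ℤ) - 1) * k)) *
        Complex.exp (2 * (Real.pi : ℂ) * Complex.I *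
          ((((d : ℝ) - 1) / 2 * ((β : ℝ) - α) : ℝ) / (d : ℂ))) ∧
    ‖overlap d a r α a s β‖ = 1 := by
  have hd0 : d ≠ 0 := by omega
  have hdC : (d : ℂ) ≠ 0 := Nat.cast_ne_zero.mpr hd0
  have hdR : (0 : ℝ) < d := by exact_mod_cast Nat.pos_of_ne_zero hd0
  set n : ℤ := ((d : ℤ) - 1) * k with hn
  have hunit : ((-1 : ℂ)) ^ n * (-1) ^ n = 1 := by
    rw [← mul_zpow]; norm_num
  have hneg : ((-1 : ℂ)) ^ (-n) = (-1) ^ n := by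
    rw [zpow_neg]; exact inv_eq_of_mul_eq_one_left hunit
  set C : ℂ := ((-1 : ℂ) ^ n) * Complex.exp (2 * (Real.pi : ℂ) * Complex.I *
          ((((d : ℝ) - 1) / 2 * ((β : ℝ) - α) : ℝ) / (d : ℂ))) with hC
  have key : ∀ idx : Fin d,
      (starRingEnd ℂ) (mubVec d a r α idx) * mubVec d a s β idx = (1 / (d : ℂ)) * C := by
    intro idx
    set ρ1 : ℝ := rho (((d : ℝ) - 1) / 2) ((idx : ℝ) - ((d : ℝ) - 1) / 2) a r α with hρ1
    set ρ2 : ℝ := rho (((d : ℝ) - 1) / 2) ((idx : ℝ) - ((d : ℝ) - 1) / 2) a s β with hρ2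
    have hρ : ρ2 - ρ1 = ((idx : ℝ) * (k : ℝ)) * d - (((d : ℝ) - 1) * (k : ℝ) / 2) * d
        + ((d : ℝ) - 1) / 2 * ((β : ℝ) - (α : ℝ)) := by
      rw [hρ1, hρ2]
      unfold rho
      linear_combination ((idx : ℝ) - ((d : ℝ) - 1) / 2) * hθ
    have hρC : ((ρ2 : ℂ)) - ((ρ1 : ℂ)) = ((idx : ℂ) * (k : ℂ)) * d
        - (((d : ℂ) - 1) * (k : ℂ) / 2) * d + ((d : ℂ) - 1) / 2 * ((β : ℂ) - (α : ℂ)) := by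
      exact_mod_cast congrArg (fun x : ℝ => (x : ℂ)) hρ
    have hsq : ((1 / Real.sqrt d : ℝ) : ℂ) * ((1 / Real.sqrt d : ℝ) : ℂ) = 1 / (d : ℂ) := by
      rw [← Complex.ofReal_mul, div_mul_div_comm, one_mul, Real.mul_self_sqrt hdR.le]
      push_cast
      ring
    have hexp : -(2 * (Real.pi : ℂ) * Complex.I * ((ρ1 : ℝ) / (d : ℂ)))
        + 2 * (Real.pi : ℂ) * Complex.I * ((ρ2 : ℝ) / (d : ℂ))
        = (((idx : ℤ) * k : ℤ) : ℂ) * (2 * (Real.pi : ℂ) * Complex.I)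
          + ((-n : ℤ) : ℂ) * ((Real.pi : ℂ) * Complex.I)
          + 2 * (Real.pi : ℂ) * Complex.I *
            ((((d : ℝ) - 1) / 2 * ((β : ℝ) - α) : ℝ) / (d : ℂ)) := by
      have hd1 : (d : ℂ) * ((d : ℂ))⁻¹ = 1 := mul_inv_cancel₀ hdC
      push_cast [hn]
      linear_combination (2 * (Real.pi : ℂ) * Complex.I / (d : ℂ)) * hρC
        + (2 * (Real.pi : ℂ) * Complex.I * (idx : ℂ) * (k : ℂ)
           - (Real.pi : ℂ) * Complex.I * ((d : ℂ) - 1) * (k : ℂ)) * hd1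
    unfold mubVec
    rw [map_mul, ← Complex.exp_conj, Complex.conj_ofReal]
    have hconj : (starRingEnd ℂ) (2 * (Real.pi : ℂ) * Complex.I * ((ρ1 : ℝ) / (d : ℂ)))
        = -(2 * (Real.pi : ℂ) * Complex.I * ((ρ1 : ℝ) / (d : ℂ))) := by
      simp only [map_mul, map_div₀, map_ofNat, Complex.conj_ofReal, Complex.conj_I,
        Complex.conj_natCast]
      ring
    rw [← hρ1, ← hρ2, hconj, mul_mul_mul_comm, hsq, ← Complex.exp_add, hexp,
      Complex.exp_add, Complex.exp_add, Complex.exp_int_mul, Complex.exp_int_mul,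
      Complex.exp_two_pi_mul_I, Complex.exp_pi_mul_I, one_zpow, hneg, one_mul, hC]
  have habs : ‖C‖ = 1 := by
    rw [hC, norm_mul]
    have h1 : ‖((-1 : ℂ) ^ n)‖ = 1 := by
      rw [norm_zpow]
      norm_num
    have h2 : 2 * (Real.pi : ℂ) * Complex.I *
        ((((d : ℝ) - 1) / 2 * ((β : ℝ) - α) : ℝ) / (d : ℂ))
        = ((2 * Real.pi * ((((d : ℝ) - 1) / 2 * ((β : ℝ) - α)) / d) : ℝ) : ℂ) * Complex.I := by
      push_cast
      ring
    rw [h1, h2, Complex.norm_exp_ofReal_mul_I, one_mul]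
  have hov : overlap d a r α a s β = C := by
    unfold overlap
    rw [Finset.sum_congr rfl fun idx _ => key idx, Finset.sum_const, Finset.card_univ,
      Fintype.card_fin, nsmul_eq_mul]
    field_simp
  exact ⟨by rw [hov, hC], by rw [hov, habs]⟩
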